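/- Let K ⊂ ℝ^d be compact and assume the volume function r ↦ 𝓛^d(K(r)) is differentiable at r > 0 with derivative V'(r). Then V'(r) ≤ (d/r)·𝓛^d(K(r)). -/

import Mathlib

open Metric MeasureTheory InnerProductSpace
open scoped ENNReal NNReal

variable {d : ℕ}

lemma aux_inner (x x' y y' : EuclideanSpace ℝ (Fin d)) (h1 : ‖x - y‖ ≤ ‖x - y'‖)
    (h2 : ‖x' - y'‖ ≤ ‖x' - y‖) :
    0 ≤ ⟪x - x', y - y'⟫_ℝ := by
  have e1 : ‖x - y‖ ^ 2 ≤ ‖x - y'‖ ^ 2 :=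
    pow_le_pow_left₀ (norm_nonneg _) h1 2
  have e2 : ‖x' - y'‖ ^ 2 ≤ ‖x' - y‖ ^ 2 :=
    pow_le_pow_left₀ (norm_nonneg _) h2 2
  rw [norm_sub_sq_real, norm_sub_sq_real] at e1 e2
  have h3 : ⟪x - x', y - y'⟫_ℝ = ⟪x, y⟫_ℝ - ⟪x, y'⟫_ℝ - ⟪x', y⟫_ℝ + ⟪x', y'⟫_ℝ := by
    simp [inner_sub_left, inner_sub_right]; ring
  rw [h3]
  linarith

lemma aux_exp (c : ℝ) (hc0 : 0 ≤ c) (hc1 : c ≤ 1) (x x' y y' : EuclideanSpace ℝ (Fin d))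
    (hinner : 0 ≤ ⟪x - x', y - y'⟫_ℝ) :
    c * ‖x - x'‖ ≤ ‖(y + c • (x - y)) - (y' + c • (x' - y'))‖ := by
  have key : (y + c • (x - y)) - (y' + c • (x' - y')) = (1 - c) • (y - y') + c • (x - x') := by
    module
  have hsq : (c * ‖x - x'‖) ^ 2 ≤ ‖(y + c • (x - y)) - (y' + c • (x' - y'))‖ ^ 2 := by
    rw [key, norm_add_sq_real, real_inner_smul_left, real_inner_smul_right, norm_smul, norm_smul]
    have h1c : (0:ℝ) ≤ 1 - c := by linarith
    have hcomm : ⟪y - y', x - x'⟫_ℝ = ⟪x - x', y - y'⟫_ℝ := real_inner_comm _ _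
    rw [hcomm]
    have : |1 - c| = 1 - c := abs_of_nonneg h1c
    rw [Real.norm_eq_abs, this, Real.norm_eq_abs, abs_of_nonneg hc0]
    nlinarith [sq_nonneg ((1 - c) * ‖y - y'‖), mul_nonneg (mul_nonneg h1c hc0) hinner]
  have := Real.sqrt_le_sqrt hsq
  rwa [Real.sqrt_sq (by positivity), Real.sqrt_sq (norm_nonneg _)] at this

lemma kneser_vol_le (K : Set (EuclideanSpace ℝ (Fin d))) (hne : K.Nonempty)
    (hK : IsCompact K) {r s : ℝ} (hr : 0 < r) (hrs : r ≤ s) :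
    volume (cthickening s K) ≤ ENNReal.ofReal ((s / r) ^ d) * volume (cthickening r K) := by
  have hs : 0 < s := hr.trans_le hrs
  set c : ℝ := r / s with hc_def
  have hc0 : 0 < c := div_pos hr hs
  have hc1 : c ≤ 1 := (div_le_one hs).mpr hrs
  have hproj : ∀ x : EuclideanSpace ℝ (Fin d), ∃ y ∈ K, infDist x K = dist x y :=
    fun x => hK.exists_infDist_eq_dist hne x
  choose p hp_mem hp_dist using hproj
  set Ψ : EuclideanSpace ℝ (Fin d) → EuclideanSpace ℝ (Fin d) :=
    fun x => p x + c • (x - p x) with hΨ_def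
  set S := cthickening s K with hS_def
  have h_exp : ∀ x x', c * dist x x' ≤ dist (Ψ x) (Ψ x') := by
    intro x x'
    have h1 : ‖x - p x‖ ≤ ‖x - p x'‖ := by
      rw [← dist_eq_norm, ← dist_eq_norm, ← hp_dist x]
      exact infDist_le_dist_of_mem (hp_mem x')
    have h2 : ‖x' - p x'‖ ≤ ‖x' - p x‖ := by
      rw [← dist_eq_norm, ← dist_eq_norm, ← hp_dist x']
      exact infDist_le_dist_of_mem (hp_mem x)
    have := aux_exp c hc0.le hc1 x x' (p x) (p x') (aux_inner x x' (p x) (p x') h1 h2)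
    simpa [dist_eq_norm] using this
  have hdistS : ∀ x ∈ S, dist x (p x) ≤ s := by
    intro x hx
    rw [← hp_dist x]
    rw [hS_def, hK.cthickening_eq_biUnion_closedBall hs.le] at hx
    obtain ⟨y, hy, hxy⟩ := Set.mem_iUnion₂.mp hx
    exact le_trans (infDist_le_dist_of_mem hy) hxy
  have hΨS : ∀ x ∈ S, Ψ x ∈ cthickening r K := by
    intro x hx
    apply mem_cthickening_of_dist_le (Ψ x) (p x) r K (hp_mem x)
    have hΨp : Ψ x - p x = c • (x - p x) := by show p x + c • (x - p x) - p x = _; abel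
    have hd : dist (Ψ x) (p x) = c * dist x (p x) := by
      rw [dist_eq_norm, hΨp, norm_smul, Real.norm_eq_abs, abs_of_nonneg hc0.le, ← dist_eq_norm]
    rw [hd]
    calc c * dist x (p x) ≤ c * s := mul_le_mul_of_nonneg_left (hdistS x hx) hc0.le
      _ = r := by rw [hc_def]; field_simp
  have hinj : Set.InjOn Ψ S := by
    intro x hx x' hx' h
    have h1 := h_exp x x'
    rw [h, dist_self] at h1
    have h2 : dist x x' ≤ 0 := by nlinarith
    exact dist_le_zero.mp h2
  set T := Ψ '' S with hT_def
  set g := Function.invFunOn Ψ S with hg_def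
  have hleft : ∀ x ∈ S, g (Ψ x) = x := hinj.leftInvOn_invFunOn
  have hST : S ⊆ g '' T := fun x hx => ⟨Ψ x, Set.mem_image_of_mem _ hx, hleft x hx⟩
  have hlip : LipschitzOnWith (Real.toNNReal c⁻¹) g T := by
    apply LipschitzOnWith.of_dist_le_mul
    rintro y ⟨x, hx, rfl⟩ y' ⟨x', hx', rfl⟩
    rw [hleft x hx, hleft x' hx', Real.coe_toNNReal _ (by positivity)]
    calc dist x x' = c⁻¹ * (c * dist x x') := by field_simp
      _ ≤ c⁻¹ * dist (Ψ x) (Ψ x') :=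
        mul_le_mul_of_nonneg_left (h_exp x x') (by positivity)
  set ν : Measure (EuclideanSpace ℝ (Fin d)) := μH[(d : ℝ)] with hν_def
  haveI : ν.IsAddHaarMeasure := by
    have := MeasureTheory.isAddHaarMeasure_hausdorffMeasure
      (E := EuclideanSpace ℝ (Fin d))
    simpa [finrank_euclideanSpace_fin] using this
  have hmeas : ν S ≤ ENNReal.ofReal ((s / r) ^ d) * ν (cthickening r K) := by
    calc ν S ≤ ν (g '' T) := measure_mono hST
      _ ≤ ((Real.toNNReal c⁻¹ : ℝ≥0) : ℝ≥0∞) ^ (d : ℝ) * ν T :=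
          hlip.hausdorffMeasure_image_le (Nat.cast_nonneg d)
      _ ≤ ((Real.toNNReal c⁻¹ : ℝ≥0) : ℝ≥0∞) ^ (d : ℝ) * ν (cthickening r K) := by
          gcongr
          exact Set.image_subset_iff.mpr hΨS
      _ = ENNReal.ofReal ((s / r) ^ d) * ν (cthickening r K) := by
          congr 1
          rw [ENNReal.rpow_natCast]
          have hcinv : c⁻¹ = s / r := by rw [hc_def]; field_simp
          rw [hcinv, ENNReal.ofReal_pow (by positivity)]
          rfl
  have hEq : ν = Measure.addHaarScalarFactor ν volume • volume :=
    Measure.isAddLeftInvariant_eq_smul ν volume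
  set cst := Measure.addHaarScalarFactor ν volume with hcst
  have hcst_pos : 0 < cst := Measure.addHaarScalarFactor_pos_of_isAddHaarMeasure ν volume
  have hν_apply : ∀ A : Set (EuclideanSpace ℝ (Fin d)), ν A = ((cst : ℝ≥0) : ℝ≥0∞) * volume A := by
    intro A
    rw [hEq]
    simp [Measure.smul_apply, smul_eq_mul]
  rw [hν_apply, hν_apply] at hmeas
  rw [show ENNReal.ofReal ((s / r) ^ d) * (((cst : ℝ≥0) : ℝ≥0∞) * volume (cthickening r K))
      = ((cst : ℝ≥0) : ℝ≥0∞) * (ENNReal.ofReal ((s / r) ^ d) * volume (cthickening r K)) by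
    ring] at hmeas
  exact (ENNReal.mul_le_mul_iff_right (ENNReal.coe_ne_zero.mpr hcst_pos.ne') ENNReal.coe_ne_top).mp hmeas

theorem parallel_volume_deriv_le {d : ℕ}
    (K : Set (EuclideanSpace ℝ (Fin d))) (hne : K.Nonempty) (hK : IsCompact K)
    (r V' : ℝ) (hr : 0 < r)
    (hderiv : HasDerivAt (fun s : ℝ => (volume (cthickening s K)).toReal) V' r) :
    V' ≤ (d / r) * (volume (cthickening r K)).toReal := by
  set f : ℝ → ℝ := fun s => (volume (cthickening s K)).toReal with hf_def
  have hfin : ∀ t : ℝ, volume (cthickening t K) ≠ ⊤ := fun t =>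
    (hK.cthickening.measure_lt_top).ne
  have hle : ∀ s, r ≤ s → f s ≤ (s / r) ^ d * f r := by
    intro s hs
    have hs0 : 0 < s := hr.trans_le hs
    have h := kneser_vol_le K hne hK hr hs
    calc f s ≤ (ENNReal.ofReal ((s / r) ^ d) * volume (cthickening r K)).toReal :=
          ENNReal.toReal_mono (ENNReal.mul_ne_top ENNReal.ofReal_ne_top (hfin r)) h
      _ = (s / r) ^ d * f r := by
          rw [ENNReal.toReal_mul, ENNReal.toReal_ofReal (by positivity)]
  set h : ℝ → ℝ := fun s => (s / r) ^ d * f r with hh_def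
  have hfr : h r = f r := by simp [hh_def, div_self hr.ne']
  have hh : HasDerivAt h ((d / r) * f r) r := by
    have h1 : HasDerivAt (fun s : ℝ => (s / r) ^ d) ((d : ℝ) * (r / r) ^ (d - 1) * (1 / r)) r := by
      have := ((hasDerivAt_id r).div_const r).fun_pow d
      simpa using this
    have h2 := h1.mul_const (f r)
    have e : (d / r : ℝ) * f r = (d : ℝ) * (r / r) ^ (d - 1) * (1 / r) * f r := by
      rw [div_self hr.ne', one_pow]
      ring
    rw [e]; exact h2
  have hslope : ∀ s ∈ Set.Ioi r, slope f r s ≤ slope h r s := by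
    intro s hs
    rw [slope_def_field, slope_def_field]
    have hsr : (0:ℝ) < s - r := sub_pos.mpr hs
    have hnum : f s - f r ≤ h s - h r := by
      have h1 := hle s hs.le
      rw [hfr]
      simp only [hh_def]
      linarith
    gcongr
  have t1 : Filter.Tendsto (slope f r) (nhdsWithin r (Set.Ioi r)) (nhds V') :=
    (hasDerivAt_iff_tendsto_slope.mp hderiv).mono_left
      (nhdsWithin_mono r fun x hx => ne_of_gt hx)
  have t2 : Filter.Tendsto (slope h r) (nhdsWithin r (Set.Ioi r)) (nhds ((d / r) * f r)) :=
    (hasDerivAt_iff_tendsto_slope.mp hh).mono_left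
      (nhdsWithin_mono r fun x hx => ne_of_gt hx)
  exact le_of_tendsto_of_tendsto t1 t2 (eventually_nhdsWithin_of_forall hslope)
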